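/- If R is Gaussian with mean μ = π/(2√2) + kπ/√2 for some integer k and variance σ² = (1/4)ln 3, then E[cos(√2 R)] = 0 and E[cos(2√2 R)] = −1/3; consequently P_3 has uniform average mixing under R. -/

import Mathlib

open Matrix MeasureTheory ProbabilityTheory Real
open scoped Matrix NNReal ENNReal

noncomputable section

/-- Spectral projection of `A(P₃)` for the eigenvalue `√2`. -/
def Ep : Matrix (Fin 3) (Fin 3) ℝ :=
  (1 / 4 : ℝ) • !![1, Real.sqrt 2, 1; Real.sqrt 2, 2, Real.sqrt 2; 1, Real.sqrt 2, 1]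

/-- Spectral projection of `A(P₃)` for the eigenvalue `0`. -/
def Ez : Matrix (Fin 3) (Fin 3) ℝ :=
  (1 / 2 : ℝ) • !![1, 0, -1; 0, 0, 0; -1, 0, 1]

/-- Spectral projection of `A(P₃)` for the eigenvalue `-√2`. -/
def Em : Matrix (Fin 3) (Fin 3) ℝ :=
  (1 / 4 : ℝ) • !![1, -Real.sqrt 2, 1; -Real.sqrt 2, 2, -Real.sqrt 2; 1, -Real.sqrt 2, 1]

/-- The average mixing matrix of `P₃` under a sampling distribution `μ`. -/
def ammP3 (μ : Measure ℝ) : Matrix (Fin 3) (Fin 3) ℝ :=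
  Ep ⊙ Ep + Ez ⊙ Ez + Em ⊙ Em +
    (2 * ∫ t, Real.cos (Real.sqrt 2 * t) ∂μ) • (Ep ⊙ Ez) +
    (2 * ∫ t, Real.cos (Real.sqrt 2 * t) ∂μ) • (Ez ⊙ Em) +
    (2 * ∫ t, Real.cos (2 * Real.sqrt 2 * t) ∂μ) • (Ep ⊙ Em)

open Complex in
lemma integral_cos_gaussianReal (m : ℝ) {v : ℝ≥0} (hv : v ≠ 0) (w : ℝ) :
    ∫ t, Real.cos (w * t) ∂(gaussianReal m v) =
      Real.cos (w * m) * Real.exp (-(v : ℝ) * w ^ 2 / 2) := by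
  have hv0 : (0:ℝ) < (v:ℝ) := by
    have := pos_iff_ne_zero.mpr hv
    exact_mod_cast this
  have hvC : (v:ℂ) ≠ 0 := by exact_mod_cast hv0.ne'
  set s : ℝ := Real.sqrt (2 * π * v) with hs_def
  have hs : 0 < s := Real.sqrt_pos.mpr (by positivity)
  have hb : (-(1/(2*(v:ℂ)))).re < 0 := by
    have h1 : (-(1/(2*(v:ℂ)))) = ((-(1/(2*(v:ℝ))):ℝ):ℂ) := by push_cast; ring
    rw [h1, Complex.ofReal_re]
    have : (0:ℝ) < 1/(2*(v:ℝ)) := by positivity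
    linarith
  have hpt : ∀ t : ℝ, ((gaussianPDFReal m v t : ℝ) : ℂ) * cexp (↑(w*t) * I) =
      ((s⁻¹ : ℝ) : ℂ) *
        cexp (-(1/(2*(v:ℂ))) * t^2 + ((w:ℂ)*I + m/v) * t + (-(m:ℂ)^2/(2*(v:ℂ)))) := by
    intro t
    rw [gaussianPDFReal]
    push_cast
    rw [mul_assoc, ← Complex.exp_add]
    congr 2
    field_simp
    ring
  have hint : Integrable (fun t : ℝ => ((gaussianPDFReal m v t : ℝ) : ℂ) * cexp (↑(w*t) * I)) := by
    simp_rw [hpt]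
    exact (integrable_cexp_quadratic' hb _ _).const_mul _
  have hC : (∫ t : ℝ, ((gaussianPDFReal m v t : ℝ):ℂ) * cexp (↑(w*t) * I))
      = cexp (↑(w*m) * I + Complex.ofReal (-(v:ℝ) * w^2 / 2)) := by
    simp_rw [hpt]
    rw [MeasureTheory.integral_const_mul, integral_cexp_quadratic hb]
    have h1 : ((π:ℂ) / -(-(1/(2*(v:ℂ))))) = ((2*π*(v:ℝ) : ℝ) : ℂ) := by
      push_cast; field_simp
    have h2 : ((2*π*(v:ℝ) : ℝ) : ℂ) ^ (1/2 : ℂ) = (s : ℂ) := by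
      rw [show ((1:ℂ)/2) = (((1/2 : ℝ):ℝ) : ℂ) by norm_num,
        ← Complex.ofReal_cpow (by positivity), hs_def, Real.sqrt_eq_rpow]
    have h3 : (-(m:ℂ)^2/(2*(v:ℂ)) - ((w:ℂ)*I + m/v)^2 / (4 * -(1/(2*(v:ℂ)))))
        = ↑(w*m) * I + Complex.ofReal (-(v:ℝ) * w^2 / 2) := by
      push_cast
      field_simp
      linear_combination (4*((v:ℝ):ℂ)^2*(w:ℂ)^2) * Complex.I_sq
    rw [h1, h2, h3, ← mul_assoc]
    norm_cast
    rw [inv_mul_cancel₀ hs.ne']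
    simp
  rw [gaussianReal_of_var_ne_zero m hv]
  have hd : gaussianPDF m v = fun t => ((Real.toNNReal (gaussianPDFReal m v t) : ℝ≥0) : ℝ≥0∞) :=
    rfl
  rw [hd, integral_withDensity_eq_integral_smul ((measurable_gaussianPDFReal m v).real_toNNReal) _]
  have hsm : ∀ t, (Real.toNNReal (gaussianPDFReal m v t)) • Real.cos (w*t)
      = gaussianPDFReal m v t * Real.cos (w*t) := by
    intro t; simp [NNReal.smul_def, Real.coe_toNNReal _ (gaussianPDFReal_nonneg m v t)]
  simp_rw [hsm]
  have hre := integral_re hint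
  rw [hC] at hre
  simp only [RCLike.re_to_complex, Complex.mul_re, Complex.ofReal_re, Complex.ofReal_im,
    Complex.exp_ofReal_mul_I_re, Complex.exp_ofReal_mul_I_im, zero_mul, sub_zero] at hre
  rw [hre, Complex.exp_add, ← Complex.ofReal_exp, Complex.mul_re,
    Complex.ofReal_re, Complex.ofReal_im, Complex.exp_ofReal_mul_I_re,
    Complex.exp_ofReal_mul_I_im]
  ring

/-- if `R` is Gaussian with mean `μ = π/(2√2) + kπ/√2` (`k ∈ ℤ`) and
variance `σ² = (1/4) ln 3`, then `E[cos (√2 R)] = 0` and `E[cos (2√2 R)] = -1/3`;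
consequently `P₃` has uniform average mixing under `R`. -/
theorem uniform_average_mixing_P3_gaussian (k : ℤ) :
    (∫ t, Real.cos (Real.sqrt 2 * t)
        ∂(gaussianReal (π / (2 * Real.sqrt 2) + k * π / Real.sqrt 2)
          (Real.toNNReal ((1 / 4) * Real.log 3)))) = 0 ∧
    (∫ t, Real.cos (2 * Real.sqrt 2 * t)
        ∂(gaussianReal (π / (2 * Real.sqrt 2) + k * π / Real.sqrt 2)
          (Real.toNNReal ((1 / 4) * Real.log 3)))) = -(1 / 3) ∧
    ammP3 (gaussianReal (π / (2 * Real.sqrt 2) + k * π / Real.sqrt 2)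
        (Real.toNNReal ((1 / 4) * Real.log 3))) =
      (1 / 3 : ℝ) • Matrix.of fun _ _ => (1 : ℝ) := by
  have hlog : 0 < Real.log 3 := Real.log_pos (by norm_num)
  have hv : Real.toNNReal ((1/4) * Real.log 3) ≠ 0 := by
    rw [Ne, Real.toNNReal_eq_zero, not_le]
    linarith
  have hvr : ((Real.toNNReal ((1/4) * Real.log 3) : ℝ≥0) : ℝ) = (1/4) * Real.log 3 :=
    Real.coe_toNNReal _ (by linarith)
  have hs2 : Real.sqrt 2 ≠ 0 := by positivity
  have hsq : Real.sqrt 2 * Real.sqrt 2 = 2 := Real.mul_self_sqrt (by norm_num)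
  have h1 : (∫ t, Real.cos (Real.sqrt 2 * t)
      ∂(gaussianReal (π / (2 * Real.sqrt 2) + k * π / Real.sqrt 2)
        (Real.toNNReal ((1 / 4) * Real.log 3)))) = 0 := by
    rw [integral_cos_gaussianReal _ hv]
    have harg : Real.sqrt 2 * (π / (2 * Real.sqrt 2) + k * π / Real.sqrt 2) = π/2 + k*π := by
      field_simp
    rw [harg, Real.cos_add, Real.cos_pi_div_two, Real.sin_pi_div_two, Real.sin_int_mul_pi]
    ring
  have h2 : (∫ t, Real.cos (2 * Real.sqrt 2 * t)
      ∂(gaussianReal (π / (2 * Real.sqrt 2) + k * π / Real.sqrt 2)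
        (Real.toNNReal ((1 / 4) * Real.log 3)))) = -(1/3) := by
    rw [integral_cos_gaussianReal _ hv]
    have harg : 2 * Real.sqrt 2 * (π / (2 * Real.sqrt 2) + k * π / Real.sqrt 2)
        = k * (2*π) + π := by
      field_simp
      ring
    rw [harg, Real.cos_int_mul_two_pi_add_pi, hvr]
    have hexp : -((1:ℝ)/4 * Real.log 3) * (2*Real.sqrt 2)^2 / 2 = -Real.log 3 := by
      rw [mul_pow]
      rw [show Real.sqrt 2 ^2 = 2 by rw [sq, hsq]]
      ring
    rw [hexp, Real.exp_neg, Real.exp_log (by norm_num)]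
    norm_num
  refine ⟨h1, h2, ?_⟩
  rw [ammP3, h1, h2]
  ext i j
  fin_cases i <;> fin_cases j <;>
    simp [Ep, Ez, Em, Matrix.hadamard_apply, Matrix.smul_apply, Matrix.add_apply,
      Matrix.vecHead, Matrix.vecTail, Function.comp] <;>
    nlinarith [hsq]


end
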